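/- Suppose θ̂₂ ~ N(θ + b₂, s₂²) with s₂ > 0 and the bias satisfies the MSE bound b₂² ≤ s₁² − s₂² (with 0 < s₂ < s₁). Let z̃ > 0 be the critical value such that Φ((z̃ s₁ − √(s₁² − s₂²))/s₂) − Φ((−z̃ s₁ − √(s₁² − s₂²))/s₂) = 1 − α for some α ∈ (0,1). Then the coverage probability of the interval θ̂₂ ± z̃ s₁ is at least 1 − α for every b₂ with |b₂| ≤ √(s₁² − s₂²), and equals 1 − α exactly when b₂ = ±√(s₁² − s₂²). -/

import Mathlib

open MeasureTheory ProbabilityTheory Real Filter Set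

/-- Standard normal CDF. -/
noncomputable def Phi (x : ℝ) : ℝ := ((gaussianReal 0 1) (Set.Iic x)).toReal

lemma pdf_cont : Continuous (gaussianPDFReal 0 1) := by
  unfold gaussianPDFReal
  fun_prop

lemma pdf_even (x : ℝ) : gaussianPDFReal 0 1 (-x) = gaussianPDFReal 0 1 x := by
  unfold gaussianPDFReal
  norm_num

lemma pdf_mono {a b : ℝ} (h : b ^ 2 ≤ a ^ 2) :
    gaussianPDFReal 0 1 a ≤ gaussianPDFReal 0 1 b := by
  unfold gaussianPDFReal
  simp only [NNReal.coe_one, mul_one, sub_zero]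
  exact mul_le_mul_of_nonneg_left (Real.exp_le_exp.2 (by linarith)) (by positivity)

lemma Phi_eq (x : ℝ) : Phi x = ∫ t in Set.Iic x, gaussianPDFReal 0 1 t := by
  rw [Phi, gaussianReal_apply_eq_integral 0 one_ne_zero,
    ENNReal.toReal_ofReal]
  exact integral_nonneg fun t => gaussianPDFReal_nonneg _ _ _

lemma Phi_hasDerivAt (x : ℝ) : HasDerivAt Phi (gaussianPDFReal 0 1 x) x := by
  have h : Phi = fun u => Phi 0 + ∫ t in (0:ℝ)..u, gaussianPDFReal 0 1 t := by
    funext u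
    rw [Phi_eq, Phi_eq, ← intervalIntegral.integral_Iic_sub_Iic
      (integrable_gaussianPDFReal 0 1).integrableOn
      (integrable_gaussianPDFReal 0 1).integrableOn]
    ring
  rw [h]
  exact ((pdf_cont.integral_hasStrictDerivAt 0 x).hasDerivAt).const_add _

lemma Phi_neg (x : ℝ) : Phi (-x) = 1 - Phi x := by
  have h1 : Phi (-x) = ∫ t in Set.Ioi x, gaussianPDFReal 0 1 t := by
    rw [Phi_eq, show (x : ℝ) = -(-x) by ring, ← integral_comp_neg_Iic (-x), neg_neg]
    exact setIntegral_congr_fun measurableSet_Iic fun t _ => (pdf_even t).symm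
  have h2 : (∫ t in Set.Iic x, gaussianPDFReal 0 1 t)
      + ∫ t in Set.Ioi x, gaussianPDFReal 0 1 t = 1 := by
    rw [intervalIntegral.integral_Iic_add_Ioi (integrable_gaussianPDFReal 0 1).integrableOn
      (integrable_gaussianPDFReal 0 1).integrableOn]
    exact integral_gaussianPDFReal_eq_one 0 one_ne_zero
  rw [h1, Phi_eq]
  linarith

lemma gauss_Icc (l u : ℝ) (h : l ≤ u) :
    ((gaussianReal 0 1) (Set.Icc l u)).toReal = Phi u - Phi l := by
  rw [gaussianReal_apply_eq_integral 0 one_ne_zero,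
    ENNReal.toReal_ofReal (integral_nonneg fun t => gaussianPDFReal_nonneg _ _ _),
    Phi_eq, Phi_eq,
    intervalIntegral.integral_Iic_sub_Iic (integrable_gaussianPDFReal 0 1).integrableOn
      (integrable_gaussianPDFReal 0 1).integrableOn,
    intervalIntegral.integral_of_le h, ← integral_Icc_eq_integral_Ioc]

lemma map_std (m s : ℝ) (hs : 0 < s) :
    gaussianReal m (Real.toNNReal (s ^ 2)) =
      Measure.map (fun x => x * s + m) (gaussianReal 0 1) := by
  have h1 : (gaussianReal 0 1).map (· * s) = gaussianReal 0 (Real.toNNReal (s ^ 2)) := by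
    rw [gaussianReal_map_mul_const]
    congr 1
    · ring
    · apply NNReal.coe_injective
      simp [Real.coe_toNNReal _ (sq_nonneg s)]
  rw [show (fun x => x * s + m) = ((· + m) ∘ (· * s)) from rfl,
    ← Measure.map_map (measurable_add_const m) (measurable_mul_const s), h1,
    gaussianReal_map_add_const, zero_add]

lemma g_anti (c s : ℝ) (hc : 0 < c) (hs : 0 < s) :
    AntitoneOn (fun b => Phi ((c - b) / s) - Phi ((-c - b) / s)) (Set.Ici 0) := by
  have hd : ∀ b : ℝ, HasDerivAt (fun b => Phi ((c - b) / s) - Phi ((-c - b) / s))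
      (gaussianPDFReal 0 1 ((c - b) / s) * (-1 / s)
        - gaussianPDFReal 0 1 ((-c - b) / s) * (-1 / s)) b := by
    intro b
    have h1 : HasDerivAt (fun b : ℝ => (c - b) / s) (-1 / s) b := by
      simpa using ((hasDerivAt_id b).const_sub c).div_const s
    have h2 : HasDerivAt (fun b : ℝ => (-c - b) / s) (-1 / s) b := by
      simpa using ((hasDerivAt_id b).const_sub (-c)).div_const s
    exact ((Phi_hasDerivAt _).comp b h1).sub ((Phi_hasDerivAt _).comp b h2)
  apply antitoneOn_of_deriv_nonpos (convex_Ici 0)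
  · exact fun x _ => (hd x).continuousAt.continuousWithinAt
  · exact fun x _ => (hd x).differentiableAt.differentiableWithinAt
  · intro x hx
    rw [interior_Ici] at hx
    rw [(hd x).deriv]
    have hpdf : gaussianPDFReal 0 1 ((-c - x) / s) ≤ gaussianPDFReal 0 1 ((c - x) / s) := by
      apply pdf_mono
      rw [div_pow, div_pow]
      apply div_le_div_of_nonneg_right _ (by positivity)
      · nlinarith [(Set.mem_Ioi.mp hx).le]
    have he : gaussianPDFReal 0 1 ((c - x) / s) * (-1 / s)
        - gaussianPDFReal 0 1 ((-c - x) / s) * (-1 / s)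
        = (gaussianPDFReal 0 1 ((-c - x) / s) - gaussianPDFReal 0 1 ((c - x) / s)) / s := by
      ring
    rw [he]
    exact div_nonpos_of_nonpos_of_nonneg (by linarith) hs.le

theorem stmt10 {Ω : Type*} [MeasurableSpace Ω] (P : Measure Ω) [IsProbabilityMeasure P]
    (X : Ω → ℝ) (θ b₂ s₁ s₂ ztil α : ℝ)
    (hs₂ : 0 < s₂) (hs₁ : s₂ < s₁) (hz : 0 < ztil) (hα : α ∈ Set.Ioo (0 : ℝ) 1)
    (hb : |b₂| ≤ Real.sqrt (s₁ ^ 2 - s₂ ^ 2))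
    (hcal : Phi ((ztil * s₁ - Real.sqrt (s₁ ^ 2 - s₂ ^ 2)) / s₂)
          - Phi ((-(ztil * s₁) - Real.sqrt (s₁ ^ 2 - s₂ ^ 2)) / s₂) = 1 - α)
    (hX : Measure.map X P = gaussianReal (θ + b₂) (Real.toNNReal (s₂ ^ 2))) :
    (1 - α ≤ (P {ω | X ω - ztil * s₁ ≤ θ ∧ θ ≤ X ω + ztil * s₁}).toReal) ∧
    ((b₂ = Real.sqrt (s₁ ^ 2 - s₂ ^ 2) ∨ b₂ = -Real.sqrt (s₁ ^ 2 - s₂ ^ 2)) →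
      (P {ω | X ω - ztil * s₁ ≤ θ ∧ θ ≤ X ω + ztil * s₁}).toReal = 1 - α) := by
  set B : ℝ := Real.sqrt (s₁ ^ 2 - s₂ ^ 2) with hB
  set c : ℝ := ztil * s₁ with hc
  have hcpos : 0 < c := mul_pos hz (hs₂.trans hs₁)
  set g : ℝ → ℝ := fun b => Phi ((c - b) / s₂) - Phi ((-c - b) / s₂) with hg
  -- coverage computation
  have hXm : AEMeasurable X P := aemeasurable_of_map_neZero (by rw [hX]; infer_instance)
  have hset : {ω | X ω - c ≤ θ ∧ θ ≤ X ω + c} = X ⁻¹' (Set.Icc (θ - c) (θ + c)) := by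
    ext ω
    simp only [Set.mem_setOf_eq, Set.mem_preimage, Set.mem_Icc]
    constructor <;> rintro ⟨h1, h2⟩ <;> constructor <;> linarith
  have hpre : (fun x => x * s₂ + (θ + b₂)) ⁻¹' Set.Icc (θ - c) (θ + c)
      = Set.Icc ((-c - b₂) / s₂) ((c - b₂) / s₂) := by
    ext x
    simp only [Set.mem_preimage, Set.mem_Icc, div_le_iff₀ hs₂, le_div_iff₀ hs₂]
    constructor <;> rintro ⟨h1, h2⟩ <;> constructor <;> linarith
  have hcov : (P {ω | X ω - c ≤ θ ∧ θ ≤ X ω + c}).toReal = g b₂ := by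
    rw [hset, ← Measure.map_apply_of_aemeasurable hXm measurableSet_Icc, hX,
      map_std (θ + b₂) s₂ hs₂,
      Measure.map_apply (by measurability) measurableSet_Icc, hpre,
      gauss_Icc _ _ (by gcongr <;> linarith)]
  -- evenness
  have hg_even : ∀ b, g (-b) = g b := by
    intro b
    simp only [hg]
    have e1 : (c - -b) / s₂ = -((-c - b) / s₂) := by ring
    have e2 : (-c - -b) / s₂ = -((c - b) / s₂) := by ring
    rw [e1, e2, Phi_neg, Phi_neg]
    ring
  have hgB : g B = 1 - α := hcal
  have hBnn : (0:ℝ) ≤ B := Real.sqrt_nonneg _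
  have hanti := g_anti c s₂ hcpos hs₂
  have habs : g b₂ = g |b₂| := by
    rcases abs_cases b₂ with ⟨h, _⟩ | ⟨h, _⟩
    · rw [h]
    · rw [h, hg_even]
  have hmain : 1 - α ≤ g b₂ := by
    rw [habs, ← hgB]
    exact hanti (abs_nonneg b₂) (Set.mem_Ici.2 hBnn) hb
  refine ⟨by rw [hcov]; exact hmain, ?_⟩
  rintro (h | h)
  · rw [hcov, h, hgB]
  · rw [hcov, h, hg_even, hgB]
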